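/- Let Γ be a discrete, cocompact subgroup of SL(2,ℝ) and let n ≥ 1. If P ∈ V_{2n} satisfies γ·P = P for every γ ∈ Γ (under the substitution action), then P = 0. In other words, the space of Γ-invariant vectors of the (2n+1)-dimensional irreducible representation of SL(2,ℝ) restricted to Γ is zero. -/

import Mathlib

open MvPolynomial Matrix

noncomputable section

/-- `SL(2,ℝ)`. -/
abbrev SL2R := Matrix.SpecialLinearGroup (Fin 2) ℝ

/-- The natural topology on `SL(2,ℝ)` (as a subspace of the `2 × 2` real matrices). -/
instance : TopologicalSpace SL2R :=
  TopologicalSpace.induced (fun g : SL2R => (g : Matrix (Fin 2) (Fin 2) ℝ)) inferInstance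

/-- `V m`: the space of homogeneous polynomials (binary forms) of degree `m`
in two variables with real coefficients. -/
def Vm (m : ℕ) : Submodule ℝ (MvPolynomial (Fin 2) ℝ) :=
  homogeneousSubmodule (Fin 2) ℝ m

/-- Linear substitution of variables by `g⁻¹`, as an algebra endomorphism of the
polynomial ring: `(subst g P)(v) = P (g⁻¹ v)`. -/
def subst (g : SL2R) : MvPolynomial (Fin 2) ℝ →ₐ[ℝ] MvPolynomial (Fin 2) ℝ :=
  aeval fun i => ∑ j, ((g⁻¹ : SL2R) : Matrix (Fin 2) (Fin 2) ℝ) i j • (X j : MvPolynomial (Fin 2) ℝ)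

lemma subst_mem (g : SL2R) {m : ℕ} {P : MvPolynomial (Fin 2) ℝ} (hP : P ∈ Vm m) :
    subst g P ∈ Vm m := by
  have h1 : ∀ i : Fin 2,
      (∑ j, ((g⁻¹ : SL2R) : Matrix (Fin 2) (Fin 2) ℝ) i j •
        (X j : MvPolynomial (Fin 2) ℝ)).IsHomogeneous 1 := by
    intro i
    apply MvPolynomial.IsHomogeneous.sum
    intro j _
    exact (homogeneousSubmodule (Fin 2) ℝ 1).smul_mem _ (isHomogeneous_X ℝ j)
  have := (MvPolynomial.IsHomogeneous.aeval hP _ h1)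
  simpa [Vm, mem_homogeneousSubmodule, subst] using this

/-- The substitution action of `g ∈ SL(2,ℝ)` on the space `V m` of binary forms of
degree `m`: `(g · P)(v) = P (g⁻¹ v)`.  This is the irreducible `(m+1)`-dimensional
representation of `SL(2,ℝ)`. -/
def substV (m : ℕ) (g : SL2R) : Vm m →ₗ[ℝ] Vm m :=
  (subst g).toLinearMap.restrict fun _ hP => subst_mem g hP

instance (m : ℕ) : FiniteDimensional ℝ (Vm m) :=
  Submodule.finiteDimensional_of_le (S₂ := restrictTotalDegree (Fin 2) ℝ m)
    (fun P hP => (mem_restrictTotalDegree _ _ _).2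
      (MvPolynomial.IsHomogeneous.totalDegree_le hP))

set_option synthInstance.maxHeartbeats 1000000 in
/-- The canonical topology on the finite-dimensional real vector space `V m`. -/
instance (m : ℕ) : TopologicalSpace (Vm m) :=
  TopologicalSpace.induced (Module.finBasis ℝ (Vm m)).equivFun inferInstance

end


-- aux lemma 1: composition
lemma subst_subst (g h : SL2R) (P : MvPolynomial (Fin 2) ℝ) :
    subst g (subst h P) = subst (g * h) P := by
  have key : (subst g).comp (subst h) = subst (g * h) := by
    rw [subst, subst, subst, MvPolynomial.comp_aeval]
    congr 1
    funext i
    have hcoe : ((g * h)⁻¹ : SL2R).val = ((h⁻¹ : SL2R).val * (g⁻¹ : SL2R).val) := by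
      rw [_root_.mul_inv_rev]; rfl
    simp only [map_sum, _root_.map_smul, aeval_X, hcoe, Matrix.mul_apply, Finset.sum_smul,
      Finset.smul_sum, smul_smul]
    rw [Finset.sum_comm]
  calc subst g (subst h P) = ((subst g).comp (subst h)) P := rfl
    _ = subst (g * h) P := by rw [key]

-- aux lemma 2: evaluation
lemma eval_subst (g : SL2R) (P : MvPolynomial (Fin 2) ℝ) (v : Fin 2 → ℝ) :
    eval v (subst g P) =
      eval (fun i => ∑ j, ((g⁻¹ : SL2R) : Matrix (Fin 2) (Fin 2) ℝ) i j * v j) P := by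
  have h1 : ∀ (w : Fin 2 → ℝ) (Q : MvPolynomial (Fin 2) ℝ),
      eval w Q = (aeval w : MvPolynomial (Fin 2) ℝ →ₐ[ℝ] ℝ) Q := by
    intro w Q
    rw [aeval_def, Algebra.algebraMap_self]
    rfl
  rw [h1, h1, subst, comp_aeval_apply]
  have h2 : (fun i => (aeval v : MvPolynomial (Fin 2) ℝ →ₐ[ℝ] ℝ)
      (∑ j, ((g⁻¹ : SL2R) : Matrix (Fin 2) (Fin 2) ℝ) i j • (X j : MvPolynomial (Fin 2) ℝ)))
      = fun i => ∑ j, ((g⁻¹ : SL2R) : Matrix (Fin 2) (Fin 2) ℝ) i j * v j := by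
    funext i
    simp [smul_eq_mul]
  rw [h2]

-- aux: continuity of g ↦ P(first column of g⁻¹)
lemma continuous_u (P : MvPolynomial (Fin 2) ℝ) :
    Continuous fun g : SL2R =>
      eval (fun i => ((g⁻¹ : SL2R) : Matrix (Fin 2) (Fin 2) ℝ) i 0) P := by
  have hcoe : Continuous fun g : SL2R => (g : Matrix (Fin 2) (Fin 2) ℝ) :=
    continuous_induced_dom
  have hadj : Continuous fun g : SL2R => ((g : Matrix (Fin 2) (Fin 2) ℝ)).adjugate :=
    hcoe.matrix_adjugate
  have hinv : ∀ g : SL2R, ((g⁻¹ : SL2R) : Matrix (Fin 2) (Fin 2) ℝ)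
      = ((g : Matrix (Fin 2) (Fin 2) ℝ)).adjugate := fun g =>
    Matrix.SpecialLinearGroup.coe_inv g
  have hcol : Continuous fun g : SL2R =>
      (fun i => ((g⁻¹ : SL2R) : Matrix (Fin 2) (Fin 2) ℝ) i 0) := by
    apply continuous_pi
    intro i
    simp only [hinv]
    exact ((continuous_apply (0 : Fin 2)).comp (continuous_apply i)).comp hadj
  exact (MvPolynomial.continuous_eval P).comp hcol

-- aux: matrix with prescribed first column
lemma exists_first_col (w : Fin 2 → ℝ) (hw : w ≠ 0) :
    ∃ h : SL2R, ∀ i, (h : Matrix (Fin 2) (Fin 2) ℝ) i 0 = w i := by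
  by_cases h0 : w 0 ≠ 0
  · refine ⟨⟨!![w 0, 0; w 1, (w 0)⁻¹], by
      rw [Matrix.det_fin_two_of]; field_simp; ring⟩, ?_⟩
    intro i
    fin_cases i <;> simp
  · push_neg at h0
    have h1 : w 1 ≠ 0 := by
      intro h1
      apply hw
      funext i; fin_cases i <;> simp [h0, h1]
    refine ⟨⟨!![0, -(w 1)⁻¹; w 1, 0], by
      rw [Matrix.det_fin_two_of]; field_simp; ring⟩, ?_⟩
    intro i
    fin_cases i <;> simp [h0]

-- aux: scaling of homogeneous polynomials
lemma eval_smul_homog {P : MvPolynomial (Fin 2) ℝ} {n : ℕ} (hP : P.IsHomogeneous n)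
    (t : ℝ) (w : Fin 2 → ℝ) : eval (t • w) P = t ^ n * eval w P := by
  rw [eval_eq, eval_eq, Finset.mul_sum]
  apply Finset.sum_congr rfl
  intro d hd
  have hdeg : d.degree = n := by
    rw [Finsupp.degree_eq_weight_one]
    exact hP (mem_support_iff.mp hd)
  have : ∏ i ∈ d.support, (t • w) i ^ d i
      = t ^ n * ∏ i ∈ d.support, w i ^ d i := by
    have : ∀ i ∈ d.support, (t • w) i ^ d i = t ^ d i * w i ^ d i := by
      intro i _
      simp [Pi.smul_apply, smul_eq_mul, mul_pow]
    rw [Finset.prod_congr rfl this, Finset.prod_mul_distrib,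
      Finset.prod_pow_eq_pow_sum]
    rw [← hdeg]
    rfl
  rw [this]
  ring


/-- If `Γ` is a discrete cocompact subgroup of `SL(2,ℝ)` and `n ≥ 1`, then the only
`Γ`-invariant binary form of degree `2n` (under the substitution action) is zero. -/
theorem no_nonzero_invariant_vectors
    (Γ : Subgroup SL2R) (hdisc : DiscreteTopology Γ)
    (hcocompact : CompactSpace (SL2R ⧸ Γ))
    (n : ℕ) (hn : 1 ≤ n)
    (P : MvPolynomial (Fin 2) ℝ) (hP : P ∈ Vm (2 * n))
    (hinv : ∀ γ : SL2R, γ ∈ Γ → subst γ P = P) :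
    P = 0 := by
  classical
  by_contra hne
  have hhom : P.IsHomogeneous (2 * n) := (mem_homogeneousSubmodule _ _).mp hP
  set u : SL2R → ℝ :=
    fun g => eval (fun i => ((g⁻¹ : SL2R) : Matrix (Fin 2) (Fin 2) ℝ) i 0) P with hu
  have key : ∀ g' : SL2R,
      u g' = eval (fun j : Fin 2 => if j = 0 then (1 : ℝ) else 0) (subst g' P) := by
    intro g'
    rw [hu, eval_subst]
    have : (fun i => ∑ j, ((g'⁻¹ : SL2R) : Matrix (Fin 2) (Fin 2) ℝ) i j *
        (if j = 0 then (1 : ℝ) else 0))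
        = fun i => ((g'⁻¹ : SL2R) : Matrix (Fin 2) (Fin 2) ℝ) i 0 := by
      funext i
      simp [Fin.sum_univ_two]
    rw [this]
  have huinv : ∀ (g γ : SL2R), γ ∈ Γ → u (g * γ) = u g := by
    intro g γ hγ
    rw [key, key, ← subst_subst, hinv γ hγ]
  have hlift : ∀ a b : SL2R, @Setoid.r _ (QuotientGroup.leftRel Γ) a b → u a = u b := by
    intro a b hab
    rw [QuotientGroup.leftRel_apply] at hab
    have : b = a * (a⁻¹ * b) := by group
    rw [this, huinv a _ hab]
  let ub : SL2R ⧸ Γ → ℝ := fun x => Quotient.liftOn' x u hlift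
  have hub : Continuous ub := (continuous_u P).quotient_liftOn' hlift
  have hcomp : IsCompact (Set.range fun x => |ub x|) := isCompact_range hub.abs
  obtain ⟨M, hM⟩ := hcomp.bddAbove
  have hMu : ∀ g : SL2R, |u g| ≤ M := by
    intro g
    exact hM ⟨QuotientGroup.mk g, rfl⟩
  have hM0 : 0 ≤ M := le_trans (abs_nonneg _) (hMu 1)
  have hbound : ∀ w : Fin 2 → ℝ, w ≠ 0 → |eval w P| ≤ M := by
    intro w hw
    obtain ⟨h, hh⟩ := exists_first_col w hw
    have hwcol : (fun i => (h : Matrix (Fin 2) (Fin 2) ℝ) i 0) = w := funext hh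
    have : u h⁻¹ = eval w P := by
      rw [hu]
      simp only [inv_inv]
      rw [hwcol]
    rw [← this]
    exact hMu h⁻¹
  -- find a point where P is nonzero
  have : ¬ ∀ r : Fin 2 → ℝ, eval r P = 0 := fun hall =>
    hne (hhom.eq_zero_of_forall_eval_eq_zero hall)
  push_neg at this
  obtain ⟨w, hwP⟩ := this
  have hw0 : w ≠ 0 := by
    intro h0
    apply hwP
    rw [h0, eval_zero, constantCoeff_eq]
    exact hhom.coeff_eq_zero (by simp [map_zero]; omega)
  have hcpos : 0 < |eval w P| := abs_pos.mpr hwP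
  set c : ℝ := |eval w P| with hc
  obtain ⟨t, ht1, htc⟩ : ∃ t : ℝ, 1 < t ∧ M + 1 ≤ t * c := by
    refine ⟨(M + 1) / c + 1, ?_, ?_⟩
    · have : 0 < (M + 1) / c := div_pos (by linarith) hcpos
      linarith
    · rw [add_mul, div_mul_cancel₀ _ (ne_of_gt hcpos)]
      nlinarith
  have htw : t • w ≠ 0 := smul_ne_zero (by linarith) hw0
  have h1 : |eval (t • w) P| ≤ M := hbound _ htw
  have h2 : eval (t • w) P = t ^ (2 * n) * eval w P := eval_smul_homog hhom t w
  have h3 : |eval (t • w) P| = t ^ (2 * n) * c := by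
    rw [h2, abs_mul, abs_pow, abs_of_pos (by linarith : (0:ℝ) < t), hc]
  have h4 : t ≤ t ^ (2 * n) := le_self_pow₀ (by linarith) (by omega)
  have h5 : t * c ≤ t ^ (2 * n) * c := mul_le_mul_of_nonneg_right h4 (le_of_lt hcpos)
  linarith
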